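/- As s → 0+, (h(s) − q·s)/s² → q·p_0. -/
import Mathlib


set_option maxHeartbeats 1000000
open MeasureTheory ProbabilityTheory Filter Topology

/-- `φ(s) = q + ∑_{n≥0} p_n s^{n+1}`. -/
noncomputable def phi (q : ℝ) (p : ℕ → ℝ) (s : ℝ) : ℝ :=
  q + ∑' n : ℕ, p n * s ^ (n + 1)

/-- `φ'(s) = ∑_{n≥0} (n+1) p_n s^n`. -/
noncomputable def phiDeriv (p : ℕ → ℝ) (s : ℝ) : ℝ :=
  ∑' n : ℕ, (n + 1 : ℝ) * p n * s ^ n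

/-- `h s` is the minimal nonnegative solution `x ∈ [0,1]` of `x = s * φ x`, for every
`s ∈ [0,1]`. -/
def IsMinimalSolution (φ : ℝ → ℝ) (h : ℝ → ℝ) : Prop :=
  ∀ s ∈ Set.Icc (0 : ℝ) 1, h s ∈ Set.Icc (0 : ℝ) 1 ∧ h s = s * φ (h s) ∧
    ∀ y ∈ Set.Icc (0 : ℝ) 1, y = s * φ y → h s ≤ y

lemma aux_summable {p : ℕ → ℝ} (hp : ∀ n, 0 ≤ p n) (hpsum : Summable p)
    {x : ℝ} (hx0 : 0 ≤ x) (hx1 : x ≤ 1) :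
    Summable (fun n : ℕ => p n * x ^ (n + 1)) := by
  apply Summable.of_nonneg_of_le (fun n => mul_nonneg (hp n) (pow_nonneg hx0 _)) _ hpsum
  intro n
  calc p n * x ^ (n + 1) ≤ p n * 1 :=
        mul_le_mul_of_nonneg_left (pow_le_one₀ hx0 hx1) (hp n)
    _ = p n := mul_one _

/-- Lemma 1(3): `(h(s) − q s)/s² → q p₀` as `s → 0+`. -/
theorem h_second_order
    (q : ℝ) (p : ℕ → ℝ) (hq : 0 < q) (hp : ∀ n, 0 ≤ p n)
    (hpsum : Summable p) (htotal : q + ∑' n : ℕ, p n = 1) (hp0 : p 0 < 1)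
    (hmoment : Summable (fun n : ℕ => (n + 1 : ℝ) * p n))
    (hcrit : ∑' n : ℕ, (n + 1 : ℝ) * p n = 1)
    (h : ℝ → ℝ) (hmin : IsMinimalSolution (phi q p) h)
:
    Tendsto (fun s => (h s - q * s) / s ^ 2) (𝓝[>] (0 : ℝ)) (𝓝 (q * p 0)) := by
  have hpsum1 : ∑' n : ℕ, p n = 1 - q := by linarith
  -- bounds for the power-series part `T x = ∑' n, p n * x^(n+1)` on `[0,1]`
  have hTlow : ∀ x : ℝ, 0 ≤ x → x ≤ 1 → p 0 * x ≤ ∑' n : ℕ, p n * x ^ (n + 1) := by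
    intro x h0 h1
    have := Summable.le_tsum (aux_summable hp hpsum h0 h1) 0
      (fun i _ => mul_nonneg (hp i) (pow_nonneg h0 _))
    simpa using this
  have hT0 : ∀ x : ℝ, 0 ≤ x → x ≤ 1 → (0:ℝ) ≤ ∑' n : ℕ, p n * x ^ (n + 1) := by
    intro x h0 h1
    exact tsum_nonneg (fun n => mul_nonneg (hp n) (pow_nonneg h0 _))
  have hTle : ∀ x : ℝ, 0 ≤ x → x ≤ 1 → (∑' n : ℕ, p n * x ^ (n + 1)) ≤ x := by
    intro x h0 h1
    calc (∑' n : ℕ, p n * x ^ (n + 1)) ≤ ∑' n : ℕ, p n * x := by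
          refine Summable.tsum_le_tsum (fun n => ?_) (aux_summable hp hpsum h0 h1) (hpsum.mul_right _)
          refine mul_le_mul_of_nonneg_left ?_ (hp n)
          calc x ^ (n + 1) ≤ x ^ 1 := pow_le_pow_of_le_one h0 h1 (by omega)
            _ = x := pow_one x
      _ = (1 - q) * x := by rw [tsum_mul_right, hpsum1, mul_comm]
      _ ≤ 1 * x := by nlinarith
      _ = x := one_mul x
  have hThigh1 : ∀ x : ℝ, 0 ≤ x → x ≤ 1 → (∑' n : ℕ, p n * x ^ (n + 1)) ≤ 1 - q := by
    intro x h0 h1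
    calc (∑' n : ℕ, p n * x ^ (n + 1)) ≤ ∑' n : ℕ, p n := by
          refine Summable.tsum_le_tsum (fun n => ?_) (aux_summable hp hpsum h0 h1) hpsum
          calc p n * x ^ (n + 1) ≤ p n * 1 :=
                mul_le_mul_of_nonneg_left (pow_le_one₀ h0 h1) (hp n)
            _ = p n := mul_one _
      _ = 1 - q := hpsum1
  have hshift : Summable (fun n : ℕ => p (n + 1)) := (summable_nat_add_iff 1).2 hpsum
  have hshift_sum : (∑' n : ℕ, p (n + 1)) ≤ 1 := by
    have h0 := hp 0
    have := Summable.tsum_eq_zero_add hpsum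
    rw [hpsum1] at this
    linarith
  have hThigh2 : ∀ x : ℝ, 0 ≤ x → x ≤ 1 →
      (∑' n : ℕ, p n * x ^ (n + 1)) ≤ p 0 * x + x ^ 2 := by
    intro x h0 h1
    have hS := aux_summable hp hpsum h0 h1
    rw [Summable.tsum_eq_zero_add hS]
    have htail : (∑' n : ℕ, p (n + 1) * x ^ (n + 1 + 1)) ≤ (∑' n : ℕ, p (n + 1)) * x ^ 2 := by
      rw [← tsum_mul_right]
      refine Summable.tsum_le_tsum (fun n => ?_) ((summable_nat_add_iff 1).2 hS) (hshift.mul_right _)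
      exact mul_le_mul_of_nonneg_left (pow_le_pow_of_le_one h0 h1 (by omega)) (hp (n + 1))
    have hx2 : (∑' n : ℕ, p (n + 1)) * x ^ 2 ≤ 1 * x ^ 2 :=
      mul_le_mul_of_nonneg_right hshift_sum (by positivity)
    have : p 0 * x ^ (0 + 1) = p 0 * x := by ring
    rw [this]
    nlinarith [htail, hx2]
  -- key per-point bounds
  have key : ∀ s ∈ Set.Ioo (0:ℝ) 1,
      q * p 0 ≤ (h s - q * s) / s ^ 2 ∧ (h s - q * s) / s ^ 2 ≤ p 0 * (q + s) + s := by
    intro s hs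
    obtain ⟨hs0, hs1⟩ := hs
    obtain ⟨⟨hh0, hh1⟩, hfix, -⟩ := hmin s ⟨hs0.le, hs1.le⟩
    set t : ℝ := ∑' n : ℕ, p n * (h s) ^ (n + 1) with ht
    have hfix' : h s = s * (q + t) := by rw [hfix]; rfl
    have b0 : 0 ≤ t := hT0 _ hh0 hh1
    have b1 : p 0 * h s ≤ t := hTlow _ hh0 hh1
    have b2 : t ≤ h s := hTle _ hh0 hh1
    have b3 : t ≤ p 0 * h s + (h s) ^ 2 := hThigh2 _ hh0 hh1
    have hst : h s - q * s = s * t := by rw [hfix']; ring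
    have b2' : t ≤ 1 - q := hThigh1 _ hh0 hh1
    have hle_s : h s ≤ s := by nlinarith [mul_le_mul_of_nonneg_left b2' hs0.le]
    have hlow_s : q * s ≤ h s := by nlinarith
    have hup2 : h s ≤ s * (q + s) := by
      nlinarith [mul_le_mul_of_nonneg_left b2 hs0.le, mul_le_mul_of_nonneg_left hle_s hs0.le]
    have hs2 : (0:ℝ) < s ^ 2 := by positivity
    constructor
    · rw [le_div_iff₀ hs2, hst]
      have c1 : s * (p 0 * (q * s)) ≤ s * (p 0 * h s) :=
        mul_le_mul_of_nonneg_left (mul_le_mul_of_nonneg_left hlow_s (hp 0)) hs0.le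
      have c2 : s * (p 0 * h s) ≤ s * t := mul_le_mul_of_nonneg_left b1 hs0.le
      nlinarith [c1, c2]
    · rw [div_le_iff₀ hs2, hst]
      have e1 : t ≤ p 0 * (s * (q + s)) + s * s := by
        nlinarith [mul_le_mul_of_nonneg_left hup2 (hp 0),
          mul_le_mul hle_s hle_s hh0 hs0.le]
      have e2 : s * t ≤ s * (p 0 * (s * (q + s)) + s * s) :=
        mul_le_mul_of_nonneg_left e1 hs0.le
      nlinarith [e2]
  have hmem : Set.Ioo (0:ℝ) 1 ∈ 𝓝[>] (0:ℝ) :=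
    Ioo_mem_nhdsGT_of_mem ⟨le_refl 0, one_pos⟩
  refine tendsto_of_tendsto_of_tendsto_of_le_of_le'
    (g := fun _ : ℝ => q * p 0) (h := fun s : ℝ => p 0 * (q + s) + s)
    tendsto_const_nhds ?_ ?_ ?_
  · have hc : Tendsto (fun s : ℝ => p 0 * (q + s) + s) (𝓝 0) (𝓝 (p 0 * (q + 0) + 0)) :=
      Continuous.tendsto (by continuity) 0
    have heq : p 0 * (q + 0) + 0 = q * p 0 := by ring
    rw [heq] at hc
    exact hc.mono_left nhdsWithin_le_nhds
  · filter_upwards [hmem] with s hs using (key s hs).1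
  · filter_upwards [hmem] with s hs using (key s hs).2
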